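/- The decomposition of a matrix in GL₂(ℤ) as ε·S_{i₀}·J·S_{i₁}·J···S_{i_{n−1}}·J·S_{i_n}·S₁^m is unique: if ε·S_{i₀}·J·S_{i₁}·J···S_{i_{n−1}}·J·S_{i_n}·S₁^m = ε'·S_{j₀}·J·S_{j₁}·J···S_{j_{n'−1}}·J·S_{j_{n'}}·S₁^{m'} where n, n' ≥ 0, ε, ε' ∈ {+1, −1}, i₀, i_n, j₀, j_{n'} ∈ {1,2,3}, i₁,…,i_{n−1}, j₁,…,j_{n'−1} ∈ {1,2}, and m, m' ∈ {0,1}, then n = n', ε = ε', m = m', and i_k = j_k for all 0 ≤ k ≤ n. -/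
import Mathlib

/-- The matrix `S₁ = [[1,-1],[0,-1]]` as an element of `GL₂(ℤ)`. -/
def S₁ : GL (Fin 2) ℤ := ⟨!![1, -1; 0, -1], !![1, -1; 0, -1], by decide, by decide⟩

/-- The matrix `S₂ = [[-1,0],[-1,1]]` as an element of `GL₂(ℤ)`. -/
def S₂ : GL (Fin 2) ℤ := ⟨!![-1, 0; -1, 1], !![-1, 0; -1, 1], by decide, by decide⟩

/-- The matrix `S₃ = [[0,1],[1,0]]` as an element of `GL₂(ℤ)`. -/
def S₃ : GL (Fin 2) ℤ := ⟨!![0, 1; 1, 0], !![0, 1; 1, 0], by decide, by decide⟩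

/-- The matrix `J = [[-1,0],[0,1]]` as an element of `GL₂(ℤ)`. -/
def Jmat : GL (Fin 2) ℤ := ⟨!![-1, 0; 0, 1], !![-1, 0; 0, 1], by decide, by decide⟩

/-- `SS k` is `Sₖ` for `k ∈ {1,2,3}` (junk value `1` otherwise). -/
def SS : ℕ → GL (Fin 2) ℤ
  | 1 => S₁
  | 2 => S₂
  | 3 => S₃
  | _ => 1

/-- `wordProd i n = S_{i 0} · J · S_{i 1} · J ⋯ S_{i (n-1)} · J · S_{i n}`,
the alternating word with `n` factors `J` and `n+1` factors `S`. -/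
def wordProd (i : ℕ → ℕ) : ℕ → GL (Fin 2) ℤ
  | 0 => SS (i 0)
  | n + 1 => wordProd i n * Jmat * SS (i (n + 1))

namespace MDU

abbrev Mat := Matrix (Fin 2) (Fin 2) ℤ
def mT : Mat := !![1,1;0,1]
def mL : Mat := !![1,0;1,1]
def mR : Mat := !![0,1;-1,0]
def mJ : Mat := !![-1,0;0,1]
def mS : ℕ → Mat
  | 1 => !![1,-1;0,-1]
  | 2 => !![-1,0;-1,1]
  | 3 => !![0,1;1,0]
  | _ => 1

inductive IsTL : Mat → Prop
  | one : IsTL 1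
  | tcons (V) : IsTL V → IsTL (mT * V)
  | lcons (V) : IsTL V → IsTL (mL * V)

lemma ext4 {A B : Mat} (h00 : A 0 0 = B 0 0) (h01 : A 0 1 = B 0 1)
    (h10 : A 1 0 = B 1 0) (h11 : A 1 1 = B 1 1) : A = B := by
  rw [Matrix.eta_fin_two A, Matrix.eta_fin_two B, h00, h01, h10, h11]

lemma mulTapp (V : Mat) : (mT * V) 0 0 = V 0 0 + V 1 0 ∧ (mT * V) 0 1 = V 0 1 + V 1 1
    ∧ (mT * V) 1 0 = V 1 0 ∧ (mT * V) 1 1 = V 1 1 := by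
  simp [mT, Matrix.mul_apply, Fin.sum_univ_two]

lemma mulLapp (V : Mat) : (mL * V) 0 0 = V 0 0 ∧ (mL * V) 0 1 = V 0 1
    ∧ (mL * V) 1 0 = V 0 0 + V 1 0 ∧ (mL * V) 1 1 = V 0 1 + V 1 1 := by
  simp [mL, Matrix.mul_apply, Fin.sum_univ_two]

lemma facts {V : Mat} (h : IsTL V) :
    (0 ≤ V 0 0 ∧ 0 ≤ V 0 1 ∧ 0 ≤ V 1 0 ∧ 0 ≤ V 1 1)
    ∧ (1 ≤ V 0 0 + V 0 1 ∧ 1 ≤ V 1 0 + V 1 1 ∧ 1 ≤ V 0 0 + V 1 0 ∧ 1 ≤ V 0 1 + V 1 1)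
    ∧ V 0 0 * V 1 1 - V 0 1 * V 1 0 = 1 := by
  induction h with
  | one => norm_num [Matrix.one_apply]
  | tcons V h ih =>
    obtain ⟨e0, e1, e2, e3⟩ := mulTapp V
    rw [e0, e1, e2, e3]
    exact ⟨by omega, by omega, by linear_combination ih.2.2⟩
  | lcons V h ih =>
    obtain ⟨e0, e1, e2, e3⟩ := mulLapp V
    rw [e0, e1, e2, e3]
    exact ⟨by omega, by omega, by linear_combination ih.2.2⟩

lemma ne_one_entries {V : Mat} (h : V ≠ 1) :
    ¬(V 0 0 = 1 ∧ V 0 1 = 0 ∧ V 1 0 = 0 ∧ V 1 1 = 1) := by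
  rintro ⟨a, b, c, d⟩
  exact h (ext4 (by simp [a, Matrix.one_apply]) (by simp [b, Matrix.one_apply])
    (by simp [c, Matrix.one_apply]) (by simp [d, Matrix.one_apply]))

lemma TW_ne_one {W : Mat} (h : IsTL W) : mT * W ≠ 1 := by
  obtain ⟨e0, e1, e2, e3⟩ := mulTapp W
  intro hc
  have := facts h
  have c1 := congrFun (congrFun hc 0) 1
  have c3 := congrFun (congrFun hc 1) 1
  rw [e1] at c1; rw [e3] at c3
  simp [Matrix.one_apply] at c1 c3
  omega

lemma LW_ne_one {W : Mat} (h : IsTL W) : mL * W ≠ 1 := by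
  obtain ⟨e0, e1, e2, e3⟩ := mulLapp W
  intro hc
  have := facts h
  have c1 := congrFun (congrFun hc 1) 0
  have c3 := congrFun (congrFun hc 0) 0
  rw [e2] at c1; rw [e0] at c3
  simp [Matrix.one_apply] at c1 c3
  omega

lemma TW_ne_LW {W W' : Mat} (h : IsTL W) (h' : IsTL W') : mT * W ≠ mL * W' := by
  obtain ⟨e0, e1, e2, e3⟩ := mulTapp W
  obtain ⟨f0, f1, f2, f3⟩ := mulLapp W'
  intro hc
  have hf := facts h
  have hf' := facts h'
  have c0 := congrFun (congrFun hc 0) 0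
  have c1 := congrFun (congrFun hc 0) 1
  have c2 := congrFun (congrFun hc 1) 0
  have c3 := congrFun (congrFun hc 1) 1
  rw [e0, f0] at c0; rw [e1, f1] at c1; rw [e2, f2] at c2; rw [e3, f3] at c3
  omega

lemma T_cancel {W W' : Mat} (h : mT * W = mT * W') : W = W' := by
  have h2 : !![1,-1;0,1] * (mT * W) = !![1,-1;0,1] * (mT * W') := by rw [h]
  rwa [← mul_assoc, ← mul_assoc, show !![1,-1;0,1] * mT = 1 by decide, one_mul, one_mul] at h2

lemma L_cancel {W W' : Mat} (h : mL * W = mL * W') : W = W' := by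
  have h2 : !![1,0;-1,1] * (mL * W) = !![1,0;-1,1] * (mL * W') := by rw [h]
  rwa [← mul_assoc, ← mul_assoc, show !![1,0;-1,1] * mL = 1 by decide, one_mul, one_mul] at h2

set_option maxHeartbeats 1000000 in
set_option linter.unreachableTactic false in
set_option linter.unusedTactic false in
lemma U {a b a' b' : ℕ} (ha : a ≤ 1) (hb : b ≤ 1) (ha' : a' ≤ 1) (hb' : b' ≤ 1)
    {s s' : ℤ} (hs : s = 1 ∨ s = -1) (hs' : s' = 1 ∨ s' = -1)
    {V V' : Mat} (hV : IsTL V) (hV' : IsTL V')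
    (h1 : a = 0 → V ≠ 1) (h1' : a' = 0 → V' ≠ 1)
    (heq : s • (mR ^ a * V * mR ^ b) = s' • (mR ^ a' * V' * mR ^ b')) :
    a = a' ∧ b = b' ∧ V = V' ∧ s = s' := by
  obtain ⟨⟨p0, p1, p2, p3⟩, ⟨q0, q1, q2, q3⟩, hdet⟩ := facts hV
  obtain ⟨⟨p0', p1', p2', p3'⟩, ⟨q0', q1', q2', q3'⟩, hdet'⟩ := facts hV'
  have hne : a = 0 → ¬(V 0 0 = 1 ∧ V 0 1 = 0 ∧ V 1 0 = 0 ∧ V 1 1 = 1) :=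
    fun h => ne_one_entries (h1 h)
  have hne' : a' = 0 → ¬(V' 0 0 = 1 ∧ V' 0 1 = 0 ∧ V' 1 0 = 0 ∧ V' 1 1 = 1) :=
    fun h => ne_one_entries (h1' h)
  interval_cases a <;> interval_cases b <;> interval_cases a' <;> interval_cases b' <;>
    rcases hs with rfl | rfl <;> rcases hs' with rfl | rfl <;>
  · have c0 := congrFun (congrFun heq 0) 0
    have c1 := congrFun (congrFun heq 0) 1
    have c2 := congrFun (congrFun heq 1) 0
    have c3 := congrFun (congrFun heq 1) 1
    simp only [pow_zero, pow_one, one_mul, mul_one, Matrix.smul_apply, Matrix.mul_apply,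
      Fin.sum_univ_two, mR, Matrix.of_apply, Matrix.cons_val', Matrix.cons_val_zero,
      Matrix.cons_val_one, Matrix.head_cons, Matrix.head_fin_const, Matrix.empty_val',
      Matrix.cons_val_fin_one, smul_eq_mul, neg_mul, mul_zero, mul_one, zero_mul,
      add_zero, zero_add, mul_neg, neg_neg, neg_zero] at c0 c1 c2 c3
    first
      | exact ⟨rfl, rfl, ext4 (by omega) (by omega) (by omega) (by omega), rfl⟩
      | omega
      | (exfalso
         first
           | (have z1 : V 0 0 = 0 := by omega
              have z2 : V 1 1 = 0 := by omega
              have hh : V 0 1 * V 1 0 = -1 := by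
                linear_combination (-1 : ℤ) * hdet + V 1 1 * z1
              linarith [mul_nonneg p1 p2])
           | (have z1 : V' 0 0 = 0 := by omega
              have z2 : V' 1 1 = 0 := by omega
              have hh : V' 0 1 * V' 1 0 = -1 := by
                linear_combination (-1 : ℤ) * hdet' + V' 1 1 * z1
              linarith [mul_nonneg p1' p2'])
           | (have z1 : V 0 1 = 0 := by omega
              have z2 : V 1 0 = 0 := by omega
              have hh : V 0 0 * V 1 1 = 1 := by
                linear_combination hdet + V 1 0 * z1
              rcases Int.mul_eq_one_iff_eq_one_or_neg_one.mp hh with ⟨u1, u2⟩ | ⟨u1, u2⟩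
              · exact hne rfl ⟨u1, z1, z2, u2⟩
              · omega)
           | (have z1 : V' 0 1 = 0 := by omega
              have z2 : V' 1 0 = 0 := by omega
              have hh : V' 0 0 * V' 1 1 = 1 := by
                linear_combination hdet' + V' 1 0 * z1
              rcases Int.mul_eq_one_iff_eq_one_or_neg_one.mp hh with ⟨u1, u2⟩ | ⟨u1, u2⟩
              · exact hne' rfl ⟨u1, z1, z2, u2⟩
              · omega))

/-! ### The word product at the matrix level -/

def wpM (i : ℕ → ℕ) (n : ℕ) : Mat := (wordProd i n : GL (Fin 2) ℤ)

lemma valS : ∀ k, ((SS k : GL (Fin 2) ℤ) : Mat) = mS k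
  | 0 => rfl
  | 1 => rfl
  | 2 => rfl
  | 3 => rfl
  | (_ + 4) => rfl

lemma valJ : ((Jmat : GL (Fin 2) ℤ) : Mat) = mJ := rfl

lemma wpM_zero (i : ℕ → ℕ) : wpM i 0 = mS (i 0) := valS (i 0)

lemma wpM_succ (i : ℕ → ℕ) (n : ℕ) :
    wpM i (n + 1) = wpM i n * mJ * mS (i (n + 1)) := by
  show ((wordProd i n * Jmat * SS (i (n+1)) : GL (Fin 2) ℤ) : Mat) = _
  rw [Units.val_mul, Units.val_mul, valS, valJ]; rfl

lemma wpGL_succ_left (i : ℕ → ℕ) :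
    ∀ n, wordProd i (n + 1) = SS (i 0) * Jmat * wordProd (fun k => i (k + 1)) n := by
  intro n
  induction n with
  | zero => rfl
  | succ n ih =>
    show wordProd i (n + 1) * Jmat * SS (i (n + 2)) = _
    rw [ih]
    show _ = SS (i 0) * Jmat * (wordProd (fun k => i (k + 1)) n * Jmat * SS (i (n + 2)))
    simp [mul_assoc]

lemma wpM_succ_left (i : ℕ → ℕ) (n : ℕ) :
    wpM i (n + 1) = mS (i 0) * mJ * wpM (fun k => i (k + 1)) n := by
  unfold wpM
  rw [wpGL_succ_left, Units.val_mul, Units.val_mul, valS, valJ]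

lemma wpMJ_succ (i : ℕ → ℕ) (n : ℕ) :
    wpM i (n + 1) * mJ = (mS (i 0) * mJ) * (wpM (fun k => i (k + 1)) n * mJ) := by
  rw [wpM_succ_left]; simp [mul_assoc]


lemma det_wpM : ∀ (n : ℕ) (i : ℕ → ℕ), (∀ k, k ≤ n → i k = 1 ∨ i k = 2 ∨ i k = 3) →
    (wpM i n).det = -1 := by
  intro n
  induction n with
  | zero =>
    intro i h
    rcases h 0 le_rfl with h0 | h0 | h0 <;> rw [wpM_zero, h0] <;> decide
  | succ n ih =>
    intro i h
    rw [wpM_succ, Matrix.det_mul, Matrix.det_mul, ih i (fun k hk => h k (by omega)),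
      show mJ.det = -1 from by decide]
    rcases h (n + 1) le_rfl with h0 | h0 | h0 <;> rw [h0] <;> decide

lemma WS : ∀ (n : ℕ) (i : ℕ → ℕ), (i 0 = 1 ∨ i 0 = 2 ∨ i 0 = 3) →
    (i n = 1 ∨ i n = 2 ∨ i n = 3) → (∀ k, 0 < k → k < n → i k = 1 ∨ i k = 2) →
    ∃ s V b, (s = 1 ∨ s = -1) ∧ IsTL V ∧ b ≤ 1 ∧
      wpM i n * mJ = s • (mR ^ (if i 0 = 3 then 1 else 0) * V * mR ^ b) ∧
      (i 0 = 1 → ∃ W, IsTL W ∧ V = mT * W ∧ (n = 0 → W = 1 ∧ b = 0) ∧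
        (1 ≤ n → (W ≠ 1 ∨ b = 1))) ∧
      (i 0 = 2 → ∃ W, IsTL W ∧ V = mL * W ∧ (n = 0 → W = 1 ∧ b = 0) ∧
        (1 ≤ n → (W ≠ 1 ∨ b = 1))) ∧
      (i 0 = 3 → (n = 0 ∧ V = 1 ∧ b = 0) ∨ (1 ≤ n ∧ (V ≠ 1 ∨ b = 1))) := by
  intro n
  induction n with
  | zero =>
    intro i hi0 _ _
    have h0 : wpM i 0 * mJ = mS (i 0) * mJ := by rw [wpM_zero]
    rcases hi0 with h | h | h
    · refine ⟨-1, mT * 1, 0, Or.inr rfl, IsTL.tcons 1 IsTL.one, by omega, ?_, ?_, ?_, ?_⟩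
      · rw [h0, h]; decide
      · exact fun _ => ⟨1, IsTL.one, rfl, fun _ => ⟨rfl, rfl⟩, fun hc => by omega⟩
      · intro hc; omega
      · intro hc; omega
    · refine ⟨1, mL * 1, 0, Or.inl rfl, IsTL.lcons 1 IsTL.one, by omega, ?_, ?_, ?_, ?_⟩
      · rw [h0, h]; decide
      · intro hc; omega
      · exact fun _ => ⟨1, IsTL.one, rfl, fun _ => ⟨rfl, rfl⟩, fun hc => by omega⟩
      · intro hc; omega
    · refine ⟨1, 1, 0, Or.inl rfl, IsTL.one, by omega, ?_, ?_, ?_, ?_⟩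
      · rw [h0, h]; decide
      · intro hc; omega
      · intro hc; omega
      · exact fun _ => Or.inl ⟨rfl, rfl, rfl⟩
  | succ n ih =>
    intro i hi0 hin himid
    have hi'0 : i 1 = 1 ∨ i 1 = 2 ∨ i 1 = 3 := by
      rcases Nat.eq_zero_or_pos n with rfl | hpos
      · exact hin
      · rcases himid 1 (by omega) (by omega) with h | h
        · exact Or.inl h
        · exact Or.inr (Or.inl h)
    by_cases h13 : i 1 = 3
    · -- then n = 0 and the word is (i 0, 3)
      have hn0 : n = 0 := by
        by_contra hh
        rcases himid 1 (by omega) (by omega) with h | h <;> omega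
      subst hn0
      have e0 : wpM (fun k => i (k + 1)) 0 * mJ = mS 3 * mJ := by
        rw [wpM_zero]
        show mS (i 1) * mJ = _
        rw [h13]
      have e : wpM i 1 * mJ = (mS (i 0) * mJ) * (mS 3 * mJ) := by
        rw [wpMJ_succ, e0]
      rcases hi0 with h | h | h
      · refine ⟨-1, mT * 1, 1, Or.inr rfl, IsTL.tcons 1 IsTL.one, by omega, ?_, ?_, ?_, ?_⟩
        · rw [e, h]; decide
        · exact fun _ => ⟨1, IsTL.one, rfl, fun hc => by omega, fun _ => Or.inr rfl⟩
        · intro hc; omega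
        · intro hc; omega
      · refine ⟨1, mL * 1, 1, Or.inl rfl, IsTL.lcons 1 IsTL.one, by omega, ?_, ?_, ?_, ?_⟩
        · rw [e, h]; decide
        · intro hc; omega
        · exact fun _ => ⟨1, IsTL.one, rfl, fun hc => by omega, fun _ => Or.inr rfl⟩
        · intro hc; omega
      · refine ⟨1, 1, 1, Or.inl rfl, IsTL.one, by omega, ?_, ?_, ?_, ?_⟩
        · rw [e, h]; decide
        · intro hc; omega
        · intro hc; omega
        · exact fun _ => Or.inr ⟨by omega, Or.inr rfl⟩
    · -- i 1 ≠ 3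
      have hi'n : i (n + 1) = 1 ∨ i (n + 1) = 2 ∨ i (n + 1) = 3 := hin
      have hi'mid : ∀ k, 0 < k → k < n → i (k + 1) = 1 ∨ i (k + 1) = 2 :=
        fun k hk1 hk2 => himid (k + 1) (by omega) (by omega)
      obtain ⟨s₁, V₁, b₁, hs₁, hV₁, hb₁, hrep, C1, C2, C3⟩ :=
        ih (fun k => i (k + 1)) hi'0 hi'n hi'mid
      rw [if_neg h13, pow_zero, one_mul] at hrep
      have hV₁ne : V₁ ≠ 1 := by
        rcases hi'0 with h | h | h
        · obtain ⟨W, hW, hVW, _, _⟩ := C1 h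
          rw [hVW]; exact TW_ne_one hW
        · obtain ⟨W, hW, hVW, _, _⟩ := C2 h
          rw [hVW]; exact LW_ne_one hW
        · exact absurd h h13
      rcases hi0 with h | h | h
      · refine ⟨-s₁, mT * V₁, b₁, by rcases hs₁ with rfl | rfl <;> simp,
          IsTL.tcons _ hV₁, hb₁, ?_, ?_, ?_, ?_⟩
        · rw [wpMJ_succ, hrep, h, if_neg (by omega), pow_zero, one_mul, mul_smul_comm,
            show mS 1 * mJ = -mT from by decide, neg_mul, smul_neg, ← neg_smul, mul_assoc]
        · exact fun _ => ⟨V₁, hV₁, rfl, fun hc => by omega, fun _ => Or.inl hV₁ne⟩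
        · intro hc; omega
        · intro hc; omega
      · refine ⟨s₁, mL * V₁, b₁, hs₁, IsTL.lcons _ hV₁, hb₁, ?_, ?_, ?_, ?_⟩
        · rw [wpMJ_succ, hrep, h, if_neg (by omega), pow_zero, one_mul, mul_smul_comm,
            show mS 2 * mJ = mL from by decide, mul_assoc]
        · intro hc; omega
        · exact fun _ => ⟨V₁, hV₁, rfl, fun hc => by omega, fun _ => Or.inl hV₁ne⟩
        · intro hc; omega
      · refine ⟨s₁, V₁, b₁, hs₁, hV₁, hb₁, ?_, ?_, ?_, ?_⟩
        · rw [wpMJ_succ, hrep, h, if_pos rfl, pow_one, mul_smul_comm,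
            show mS 3 * mJ = mR from by decide, mul_assoc]
        · intro hc; omega
        · intro hc; omega
        · exact fun _ => Or.inr ⟨by omega, Or.inl hV₁ne⟩


lemma heads {n n' : ℕ} {i j : ℕ → ℕ} {s s' : ℤ}
    (hs : s = 1 ∨ s = -1) (hs' : s' = 1 ∨ s' = -1)
    (hi0 : i 0 = 1 ∨ i 0 = 2 ∨ i 0 = 3) (hin : i n = 1 ∨ i n = 2 ∨ i n = 3)
    (himid : ∀ k, 0 < k → k < n → i k = 1 ∨ i k = 2)
    (hj0 : j 0 = 1 ∨ j 0 = 2 ∨ j 0 = 3) (hjn : j n' = 1 ∨ j n' = 2 ∨ j n' = 3)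
    (hjmid : ∀ k, 0 < k → k < n' → j k = 1 ∨ j k = 2)
    (heq : s • wpM i n = s' • wpM j n') :
    i 0 = j 0 ∧ (n = 0 ↔ n' = 0) := by
  obtain ⟨s₁, V, b, hs₁, hV, hb, hrep, C1, C2, C3⟩ := WS n i hi0 hin himid
  obtain ⟨s₁', V', b', hs₁', hV', hb', hrep', C1', C2', C3'⟩ := WS n' j hj0 hjn hjmid
  have heqJ : (s * s₁) • (mR ^ (if i 0 = 3 then 1 else 0) * V * mR ^ b)
      = (s' * s₁') • (mR ^ (if j 0 = 3 then 1 else 0) * V' * mR ^ b') := by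
    have h2 := congrArg (fun M => M * mJ) heq
    simp only [smul_mul_assoc] at h2
    rw [hrep, hrep', smul_smul, smul_smul] at h2
    exact h2
  have hU := U (a := if i 0 = 3 then 1 else 0) (a' := if j 0 = 3 then 1 else 0)
    (by split <;> omega) hb (by split <;> omega) hb'
    (by rcases hs with rfl | rfl <;> rcases hs₁ with rfl | rfl <;> norm_num)
    (by rcases hs' with rfl | rfl <;> rcases hs₁' with rfl | rfl <;> norm_num)
    hV hV'
    (by intro ha
        rcases hi0 with h | h | h
        · obtain ⟨W, hW, hVW, _, _⟩ := C1 h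
          rw [hVW]; exact TW_ne_one hW
        · obtain ⟨W, hW, hVW, _, _⟩ := C2 h
          rw [hVW]; exact LW_ne_one hW
        · rw [if_pos h] at ha; omega)
    (by intro ha
        rcases hj0 with h | h | h
        · obtain ⟨W, hW, hVW, _, _⟩ := C1' h
          rw [hVW]; exact TW_ne_one hW
        · obtain ⟨W, hW, hVW, _, _⟩ := C2' h
          rw [hVW]; exact LW_ne_one hW
        · rw [if_pos h] at ha; omega)
    heqJ
  obtain ⟨hA, hB, hVV, _⟩ := hU
  rcases hi0 with h | h | h <;> rcases hj0 with h' | h' | h'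
  · -- 1,1
    refine ⟨by omega, ?_⟩
    obtain ⟨W, hW, hVW, hW0, hW1⟩ := C1 h
    obtain ⟨W', hW', hVW', hW0', hW1'⟩ := C1' h'
    have hWW : W = W' := T_cancel (by rw [← hVW, ← hVW', hVV])
    constructor
    · intro hz
      by_contra hz'
      obtain ⟨e1, e2⟩ := hW0 hz
      rcases hW1' (by omega) with hc | hc
      · exact hc (by rw [← hWW, e1])
      · omega
    · intro hz
      by_contra hz'
      obtain ⟨e1, e2⟩ := hW0' hz
      rcases hW1 (by omega) with hc | hc
      · exact hc (by rw [hWW, e1])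
      · omega
  · -- 1,2
    exfalso
    obtain ⟨W, hW, hVW, _, _⟩ := C1 h
    obtain ⟨W', hW', hVW', _, _⟩ := C2' h'
    exact TW_ne_LW hW hW' (by rw [← hVW, ← hVW', hVV])
  · -- 1,3
    exfalso; rw [if_neg (by omega), if_pos h'] at hA; omega
  · -- 2,1
    exfalso
    obtain ⟨W, hW, hVW, _, _⟩ := C2 h
    obtain ⟨W', hW', hVW', _, _⟩ := C1' h'
    exact TW_ne_LW hW' hW (by rw [← hVW, ← hVW', hVV])
  · -- 2,2
    refine ⟨by omega, ?_⟩
    obtain ⟨W, hW, hVW, hW0, hW1⟩ := C2 h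
    obtain ⟨W', hW', hVW', hW0', hW1'⟩ := C2' h'
    have hWW : W = W' := L_cancel (by rw [← hVW, ← hVW', hVV])
    constructor
    · intro hz
      by_contra hz'
      obtain ⟨e1, e2⟩ := hW0 hz
      rcases hW1' (by omega) with hc | hc
      · exact hc (by rw [← hWW, e1])
      · omega
    · intro hz
      by_contra hz'
      obtain ⟨e1, e2⟩ := hW0' hz
      rcases hW1 (by omega) with hc | hc
      · exact hc (by rw [hWW, e1])
      · omega
  · -- 2,3
    exfalso; rw [if_neg (by omega), if_pos h'] at hA; omega
  · -- 3,1
    exfalso; rw [if_pos h, if_neg (by omega)] at hA; omega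
  · -- 3,2
    exfalso; rw [if_pos h, if_neg (by omega)] at hA; omega
  · -- 3,3
    refine ⟨by omega, ?_⟩
    rcases C3 h with ⟨hz, hV1, hb0⟩ | ⟨hpos, halt⟩ <;>
      rcases C3' h' with ⟨hz', hV1', hb0'⟩ | ⟨hpos', halt'⟩
    · exact iff_of_true hz hz'
    · exfalso
      rcases halt' with hc | hc
      · exact hc (by rw [← hVV, hV1])
      · omega
    · exfalso
      rcases halt with hc | hc
      · exact hc (by rw [hVV, hV1'])
      · omega
    · exact iff_of_false (by omega) (by omega)


lemma main : ∀ (n n' : ℕ) (i j : ℕ → ℕ) (s s' : ℤ), (s = 1 ∨ s = -1) → (s' = 1 ∨ s' = -1) →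
    (i 0 = 1 ∨ i 0 = 2 ∨ i 0 = 3) → (i n = 1 ∨ i n = 2 ∨ i n = 3) →
    (∀ k, 0 < k → k < n → i k = 1 ∨ i k = 2) →
    (j 0 = 1 ∨ j 0 = 2 ∨ j 0 = 3) → (j n' = 1 ∨ j n' = 2 ∨ j n' = 3) →
    (∀ k, 0 < k → k < n' → j k = 1 ∨ j k = 2) →
    s • wpM i n = s' • wpM j n' →
    n = n' ∧ s = s' ∧ ∀ k ≤ n, i k = j k := by
  intro n
  induction n with
  | zero =>
    intro n' i j s s' hs hs' hi0 hin himid hj0 hjn hjmid heq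
    obtain ⟨hij0, hiff⟩ := heads hs hs' hi0 hin himid hj0 hjn hjmid heq
    have hn'0 : n' = 0 := hiff.mp rfl
    subst hn'0
    refine ⟨rfl, ?_, fun k hk => by interval_cases k; exact hij0⟩
    have hw : wpM j 0 = wpM i 0 := by rw [wpM_zero, wpM_zero, hij0]
    rw [hw] at heq
    rcases hi0 with h | h | h <;> rw [wpM_zero, h] at heq
    · have c := congrFun (congrFun heq 0) 0
      simp [mS, Matrix.smul_apply, smul_eq_mul] at c
      omega
    · have c := congrFun (congrFun heq 0) 0
      simp [mS, Matrix.smul_apply, smul_eq_mul] at c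
      omega
    · have c := congrFun (congrFun heq 0) 1
      simp [mS, Matrix.smul_apply, smul_eq_mul] at c
      omega
  | succ n IH =>
    intro n' i j s s' hs hs' hi0 hin himid hj0 hjn hjmid heq
    obtain ⟨hij0, hiff⟩ := heads hs hs' hi0 hin himid hj0 hjn hjmid heq
    cases n' with
    | zero => exact absurd (hiff.mpr rfl) (by omega)
    | succ n'' =>
      have hi'0 : i 1 = 1 ∨ i 1 = 2 ∨ i 1 = 3 := by
        rcases Nat.eq_zero_or_pos n with rfl | hpos
        · exact hin
        · rcases himid 1 (by omega) (by omega) with h | h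
          · exact Or.inl h
          · exact Or.inr (Or.inl h)
      have hj'0 : j 1 = 1 ∨ j 1 = 2 ∨ j 1 = 3 := by
        rcases Nat.eq_zero_or_pos n'' with rfl | hpos
        · exact hjn
        · rcases hjmid 1 (by omega) (by omega) with h | h
          · exact Or.inl h
          · exact Or.inr (Or.inl h)
      have hi'mid : ∀ k, 0 < k → k < n → i (k + 1) = 1 ∨ i (k + 1) = 2 :=
        fun k hk1 hk2 => himid (k + 1) (by omega) (by omega)
      have hj'mid : ∀ k, 0 < k → k < n'' → j (k + 1) = 1 ∨ j (k + 1) = 2 :=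
        fun k hk1 hk2 => hjmid (k + 1) (by omega) (by omega)
      have hZ : mJ * mS (i 0) * mS (i 0) * mJ = 1 := by
        rcases hi0 with h | h | h <;> rw [h] <;> decide
      rw [wpM_succ_left i n, wpM_succ_left j n'', ← hij0] at heq
      have h2 := congrArg (fun M => (mJ * mS (i 0)) * M) heq
      simp only [mul_smul_comm] at h2
      simp only [← mul_assoc] at h2
      rw [hZ, one_mul, one_mul] at h2
      obtain ⟨h1, hss, h3⟩ := IH n'' (fun k => i (k + 1)) (fun k => j (k + 1)) s s'
        hs hs' hi'0 hin hi'mid hj'0 hjn hj'mid h2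
      refine ⟨by omega, hss, ?_⟩
      intro k hk
      cases k with
      | zero => exact hij0
      | succ t => exact h3 t (by omega)

end MDU

open MDU in
/-- Uniqueness of the decomposition
`ε · S_{i₀} · J · S_{i₁} · J ⋯ S_{i_{n-1}} · J · S_{i_n} · S₁^m` in `GL₂(ℤ)`:
two such expressions with the same value have the same `n`, `ε`, `m`, and the same
indices `i₀, …, i_n`. -/
theorem matrix_decomposition_unique
    (n n' : ℕ) (ε ε' : GL (Fin 2) ℤ) (i j : ℕ → ℕ) (m m' : ℕ)
    (hε : ε = 1 ∨ ε = -1) (hε' : ε' = 1 ∨ ε' = -1)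
    (hi0 : i 0 = 1 ∨ i 0 = 2 ∨ i 0 = 3) (hin : i n = 1 ∨ i n = 2 ∨ i n = 3)
    (himid : ∀ k, 0 < k → k < n → i k = 1 ∨ i k = 2)
    (hj0 : j 0 = 1 ∨ j 0 = 2 ∨ j 0 = 3) (hjn : j n' = 1 ∨ j n' = 2 ∨ j n' = 3)
    (hjmid : ∀ k, 0 < k → k < n' → j k = 1 ∨ j k = 2)
    (hm : m ≤ 1) (hm' : m' ≤ 1)
    (heq : ε * wordProd i n * S₁ ^ m = ε' * wordProd j n' * S₁ ^ m') :
    n = n' ∧ ε = ε' ∧ m = m' ∧ ∀ k ≤ n, i k = j k := by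
  have hvalid_i : ∀ k, k ≤ n → i k = 1 ∨ i k = 2 ∨ i k = 3 := by
    intro k hk
    rcases eq_or_lt_of_le hk with rfl | hlt
    · exact hin
    · cases k with
      | zero => exact hi0
      | succ t =>
        rcases himid (t + 1) (by omega) hlt with h | h
        · exact Or.inl h
        · exact Or.inr (Or.inl h)
  have hvalid_j : ∀ k, k ≤ n' → j k = 1 ∨ j k = 2 ∨ j k = 3 := by
    intro k hk
    rcases eq_or_lt_of_le hk with rfl | hlt
    · exact hjn
    · cases k with
      | zero => exact hj0
      | succ t =>
        rcases hjmid (t + 1) (by omega) hlt with h | h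
        · exact Or.inl h
        · exact Or.inr (Or.inl h)
  -- first determine m = m' via determinants
  have h1 : (ε : Mat) * wpM i n * ((S₁ : GL (Fin 2) ℤ) : Mat) ^ m
      = (ε' : Mat) * wpM j n' * ((S₁ : GL (Fin 2) ℤ) : Mat) ^ m' := by
    have h0 := congrArg Units.val heq
    simpa [Units.val_mul, Units.val_pow_eq_pow_val, wpM] using h0
  have hd := congrArg Matrix.det h1
  simp only [Matrix.det_mul, Matrix.det_pow] at hd
  rw [det_wpM n i hvalid_i, det_wpM n' j hvalid_j,
    show ((S₁ : GL (Fin 2) ℤ) : Mat).det = -1 from by decide] at hd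
  have hdε : ((ε : Mat)).det = 1 := by
    rcases hε with rfl | rfl
    · simp
    · norm_num [Units.val_neg, Units.val_one, Matrix.det_neg, Fintype.card_fin]
  have hdε' : ((ε' : Mat)).det = 1 := by
    rcases hε' with rfl | rfl
    · simp
    · norm_num [Units.val_neg, Units.val_one, Matrix.det_neg, Fintype.card_fin]
  rw [hdε, hdε'] at hd
  have hmm : m = m' := by
    interval_cases m <;> interval_cases m' <;> first | rfl | (exfalso; norm_num at hd)
  subst hmm
  have heq2 : ε * wordProd i n = ε' * wordProd j n' := mul_right_cancel heq
  rcases hε with rfl | rfl <;> rcases hε' with rfl | rfl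
  · have hm2 : (1 : ℤ) • wpM i n = (1 : ℤ) • wpM j n' := by
      simp only [one_smul]
      simpa [wpM, Units.val_mul] using congrArg Units.val heq2
    obtain ⟨h1, _, h3⟩ := main n n' i j 1 1 (Or.inl rfl) (Or.inl rfl)
      hi0 hin himid hj0 hjn hjmid hm2
    exact ⟨h1, rfl, rfl, h3⟩
  · have hm2 : (1 : ℤ) • wpM i n = (-1 : ℤ) • wpM j n' := by
      simp only [one_smul, neg_smul, one_smul]
      have := congrArg Units.val heq2
      simpa [wpM, Units.val_mul, Units.val_neg, Units.val_one, neg_mul, one_mul] using this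
    obtain ⟨_, h2, _⟩ := main n n' i j 1 (-1) (Or.inl rfl) (Or.inr rfl)
      hi0 hin himid hj0 hjn hjmid hm2
    exact absurd h2 (by norm_num)
  · have hm2 : (-1 : ℤ) • wpM i n = (1 : ℤ) • wpM j n' := by
      simp only [one_smul, neg_smul, one_smul]
      have := congrArg Units.val heq2
      simpa [wpM, Units.val_mul, Units.val_neg, Units.val_one, neg_mul, one_mul] using this
    obtain ⟨_, h2, _⟩ := main n n' i j (-1) 1 (Or.inr rfl) (Or.inl rfl)
      hi0 hin himid hj0 hjn hjmid hm2
    exact absurd h2 (by norm_num)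
  · have hm2 : (-1 : ℤ) • wpM i n = (-1 : ℤ) • wpM j n' := by
      simp only [neg_smul, one_smul]
      have := congrArg Units.val heq2
      simpa [wpM, Units.val_mul, Units.val_neg, Units.val_one, neg_mul, one_mul] using this
    obtain ⟨h1, _, h3⟩ := main n n' i j (-1) (-1) (Or.inr rfl) (Or.inr rfl)
      hi0 hin himid hj0 hjn hjmid hm2
    exact ⟨h1, rfl, rfl, h3⟩
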